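/- arXiv:1509.05715 — 2 statements merged into one kernel-verified Lean document; each statement's English description precedes it below -/
import Mathlib

section
/- Suppose F_H : ℝ^{n_H} → ℝ is convex and differentiable with L_H-Lipschitz gradient, the coarse iterates satisfy F_H(x_{H,N}) < F_H(x_{H,1}) where x_{H,1} = x_{H,0} − (1/L_H)∇F_H(x_{H,0}), the restriction satisfies ∇F_H(Rx) = R∇F_μ(x) at x_{H,0} = Rx, the prolongation is P = Rᵀ, and ‖R∇F_μ(x)‖ > κ‖∇F_μ(x)‖ for some κ > 0. Then the coarse direction d(x) = Rᵀ(x_{H,N} − Rx) satisfies ⟨d(x), ∇F_μ(x)⟩ < −(κ²/(2L_H))‖∇F_μ(x)‖² ≤ 0; in particular d(x) is a descent direction for F_μ at x. -/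
open RealInnerProductSpace

variable {E : Type*} [NormedAddCommGroup E] [InnerProductSpace ℝ E] [CompleteSpace E]

lemma line_hasDerivAt (f : E → ℝ) (f' : E → E) (hf : ∀ y, HasGradientAt f (f' y) y)
    (x v : E) (t : ℝ) :
    HasDerivAt (fun t : ℝ => f (t • v + x)) ⟪f' (t • v + x), v⟫ t := by
  have hc : HasDerivAt (fun t : ℝ => t • v + x) v t := by
    simpa using ((hasDerivAt_id t).smul_const v).add_const x
  have hg := (hf (t • v + x)).hasFDerivAt
  have := hg.comp_hasDerivAt t hc
  simpa [InnerProductSpace.toDual_apply_apply, Function.comp_def] using this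

lemma descent_lemma (f : E → ℝ) (f' : E → E) (hf : ∀ y, HasGradientAt f (f' y) y)
    (L : ℝ) (hL : 0 < L) (hLip : ∀ y z, ‖f' y - f' z‖ ≤ L * ‖y - z‖)
    (x y : E) :
    f y ≤ f x + ⟪f' x, y - x⟫ + L / 2 * ‖y - x‖ ^ 2 := by
  set v := y - x with hv
  have hf'cont : Continuous f' := by
    have : LipschitzWith L.toNNReal f' := by
      apply LipschitzWith.of_dist_le_mul
      intro a b
      simpa [dist_eq_norm, Real.coe_toNNReal L hL.le] using hLip a b
    exact this.continuous
  have hg : ∀ t : ℝ, HasDerivAt (fun t : ℝ => f (t • v + x)) ⟪f' (t • v + x), v⟫ t :=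
    line_hasDerivAt f f' hf x v
  have hcont : Continuous fun t : ℝ => ⟪f' (t • v + x), v⟫ := by
    apply Continuous.inner (hf'cont.comp (by continuity)) continuous_const
  have hftc : ∫ t in (0:ℝ)..1, ⟪f' (t • v + x), v⟫ = f ((1:ℝ) • v + x) - f ((0:ℝ) • v + x) :=
    intervalIntegral.integral_eq_sub_of_hasDerivAt (fun t _ => hg t)
      (hcont.intervalIntegrable 0 1)
  have hval : f y - f x = ∫ t in (0:ℝ)..1, ⟪f' (t • v + x), v⟫ := by
    rw [hftc]; simp [hv]
  have hbound : ∫ t in (0:ℝ)..1, ⟪f' (t • v + x), v⟫ ≤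
      ∫ t in (0:ℝ)..1, (⟪f' x, v⟫ + L * t * ‖v‖ ^ 2) := by
    apply intervalIntegral.integral_mono_on zero_le_one (hcont.intervalIntegrable 0 1)
      ((by continuity : Continuous fun t : ℝ => ⟪f' x, v⟫ + L * t * ‖v‖ ^ 2).intervalIntegrable 0 1)
    intro t ht
    have h1 : ⟪f' (t • v + x) - f' x, v⟫ ≤ ‖f' (t • v + x) - f' x‖ * ‖v‖ :=
      real_inner_le_norm _ _
    have h2 : ‖f' (t • v + x) - f' x‖ ≤ L * (t * ‖v‖) := by
      have := hLip (t • v + x) x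
      simpa [norm_smul, abs_of_nonneg ht.1] using this
    have h3 : ‖f' (t • v + x) - f' x‖ * ‖v‖ ≤ L * t * ‖v‖ ^ 2 := by
      calc ‖f' (t • v + x) - f' x‖ * ‖v‖ ≤ L * (t * ‖v‖) * ‖v‖ := by
            exact mul_le_mul_of_nonneg_right h2 (norm_nonneg _)
        _ = L * t * ‖v‖ ^ 2 := by ring
    have := h1.trans h3
    have h4 : ⟪f' (t • v + x), v⟫ = ⟪f' x, v⟫ + ⟪f' (t • v + x) - f' x, v⟫ := by
      rw [inner_sub_left]; ring
    linarith
  have hint : ∫ t in (0:ℝ)..1, (⟪f' x, v⟫ + L * t * ‖v‖ ^ 2) =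
      ⟪f' x, v⟫ + L / 2 * ‖v‖ ^ 2 := by
    have he : (fun t : ℝ => L * t * ‖v‖ ^ 2) = fun t : ℝ => (L * ‖v‖ ^ 2) * t := by
      funext t; ring
    rw [intervalIntegral.integral_add (intervalIntegrable_const)
      ((by continuity : Continuous fun t : ℝ => L * t * ‖v‖ ^ 2).intervalIntegrable 0 1),
      intervalIntegral.integral_const, he, intervalIntegral.integral_const_mul, integral_id]
    simp; ring
  rw [hv] at *
  linarith [hval, hbound, hint]

lemma convex_lb (f : E → ℝ) (f' : E → E) (hconv : ConvexOn ℝ Set.univ f)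
    (hf : ∀ y, HasGradientAt f (f' y) y) (x y : E) :
    f x + ⟪f' x, y - x⟫ ≤ f y := by
  set v := y - x with hv
  have hg : ∀ t : ℝ, HasDerivAt (fun t : ℝ => f (t • v + x)) ⟪f' (t • v + x), v⟫ t :=
    line_hasDerivAt f f' hf x v
  have hgconv : ConvexOn ℝ Set.univ (fun t : ℝ => f (t • v + x)) := by
    have := hconv.comp_affineMap (AffineMap.lineMap x y)
    have heq : (fun t : ℝ => f (t • v + x)) = f ∘ (AffineMap.lineMap x y) := by
      funext t
      simp only [Function.comp_apply, AffineMap.lineMap_apply_module, hv]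
      congr 1
      module
    rw [heq]
    simpa using this
  have h0 := hgconv.le_slope_of_hasDerivAt (Set.mem_univ (0:ℝ)) (Set.mem_univ 1)
    zero_lt_one (hg 0)
  have hs : slope (fun t : ℝ => f (t • v + x)) 0 1 = f y - f x := by
    simp [slope_def_field, hv]
  rw [hs] at h0
  simp only [zero_smul, zero_add] at h0
  linarith
/-- The coarse direction `d(x) = Rᵀ(x_{H,N} − Rx)` is a descent direction for
the smoothed fine objective. -/
theorem coarse_direction_descent
    {n nH : ℕ}
    (Fμ : EuclideanSpace ℝ (Fin n) → ℝ)
    (Fμ' : EuclideanSpace ℝ (Fin n) → EuclideanSpace ℝ (Fin n))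
    (hFμ' : ∀ y, HasGradientAt Fμ (Fμ' y) y)
    (FH : EuclideanSpace ℝ (Fin nH) → ℝ)
    (FH' : EuclideanSpace ℝ (Fin nH) → EuclideanSpace ℝ (Fin nH))
    (LH : ℝ) (hLH : 0 < LH)
    (hFHconv : ConvexOn ℝ Set.univ FH)
    (hFH' : ∀ y, HasGradientAt FH (FH' y) y)
    (hFHLip : ∀ y z, ‖FH' y - FH' z‖ ≤ LH * ‖y - z‖)
    (R : EuclideanSpace ℝ (Fin n) →L[ℝ] EuclideanSpace ℝ (Fin nH))
    (x : EuclideanSpace ℝ (Fin n))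
    (xH0 xH1 xHN : EuclideanSpace ℝ (Fin nH))
    (hxH0 : xH0 = R x)
    (hxH1 : xH1 = xH0 - (1 / LH) • FH' xH0)
    (hmono : FH xHN < FH xH1)
    (hcoh : FH' (R x) = R (Fμ' x))
    (κ : ℝ) (hκ0 : 0 < κ) (hκ1 : κ < 1)
    (hbig : ‖R (Fμ' x)‖ > κ * ‖Fμ' x‖) :
    ⟪(ContinuousLinearMap.adjoint R) (xHN - R x), Fμ' x⟫ <
        -(κ ^ 2 / (2 * LH)) * ‖Fμ' x‖ ^ 2 ∧
      -(κ ^ 2 / (2 * LH)) * ‖Fμ' x‖ ^ 2 ≤ 0 := by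
  set g0 := FH' xH0 with hg0
  -- adjoint identity
  have hadj : ⟪(ContinuousLinearMap.adjoint R) (xHN - R x), Fμ' x⟫
      = ⟪xHN - xH0, g0⟫ := by
    rw [ContinuousLinearMap.adjoint_inner_left, hg0, hxH0, hcoh, real_inner_comm]
  -- convexity lower bound
  have hconv := convex_lb FH FH' hFHconv hFH' xH0 xHN
  -- descent step
  have hdesc := descent_lemma FH FH' hFH' LH hLH hFHLip xH0 xH1
  have hstep : xH1 - xH0 = -((1 / LH) • g0) := by rw [hxH1]; abel
  have hinner : ⟪g0, xH1 - xH0⟫ = -(1 / LH) * ‖g0‖ ^ 2 := by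
    rw [hstep, inner_neg_right, real_inner_smul_right, real_inner_self_eq_norm_sq]
    ring
  have hnorm : ‖xH1 - xH0‖ ^ 2 = (1 / LH) ^ 2 * ‖g0‖ ^ 2 := by
    rw [hstep, norm_neg, norm_smul]
    rw [Real.norm_eq_abs, abs_of_pos (by positivity : (0:ℝ) < 1 / LH)]
    ring
  have hdesc' : FH xH1 ≤ FH xH0 - 1 / (2 * LH) * ‖g0‖ ^ 2 := by
    rw [hinner, hnorm] at hdesc
    have : -(1 / LH) * ‖g0‖ ^ 2 + LH / 2 * ((1 / LH) ^ 2 * ‖g0‖ ^ 2)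
        = -(1 / (2 * LH)) * ‖g0‖ ^ 2 := by field_simp; ring
    linarith
  -- norm comparison
  have hg0norm : ‖g0‖ > κ * ‖Fμ' x‖ := by rw [hg0, hxH0, hcoh]; exact hbig
  have hsq : κ ^ 2 * ‖Fμ' x‖ ^ 2 < ‖g0‖ ^ 2 := by
    have h1 : (κ * ‖Fμ' x‖) ^ 2 < ‖g0‖ ^ 2 := by
      apply pow_lt_pow_left₀ hg0norm (by positivity) (by norm_num)
    calc κ ^ 2 * ‖Fμ' x‖ ^ 2 = (κ * ‖Fμ' x‖) ^ 2 := by ring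
      _ < ‖g0‖ ^ 2 := h1
  constructor
  · rw [hadj]
    have hkey : ⟪xHN - xH0, g0⟫ ≤ FH xHN - FH xH0 := by
      have := hconv; rw [real_inner_comm] at this ⊢; linarith [hconv]
    have h2 : 1 / (2 * LH) * (κ ^ 2 * ‖Fμ' x‖ ^ 2) < 1 / (2 * LH) * ‖g0‖ ^ 2 :=
      mul_lt_mul_of_pos_left hsq (by positivity)
    have h3 : -(κ ^ 2 / (2 * LH)) * ‖Fμ' x‖ ^ 2 = -(1 / (2 * LH) * (κ ^ 2 * ‖Fμ' x‖ ^ 2)) := by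
      ring
    rw [h3]
    linarith
  · have : 0 ≤ κ ^ 2 / (2 * LH) * ‖Fμ' x‖ ^ 2 := by positivity
    linarith
end

section
/- Let f be convex with L_f-Lipschitz gradient, g convex, F = f+g, and F_μ = f + g_μ where g_μ is a μ-smooth approximation of g with parameters (α, β, K) (so g − β₁μ ≤ g_μ ≤ g + β₂μ and ∇F_μ is Lipschitz). Fix x and let x̃ = prox(x) w.r.t. L_f. Then Prog(x) ≤ (1/(2L_f))‖∇F_μ(x)‖² + βμ. -/
open RealInnerProductSpace

lemma grad_lower_bound_aux {n : ℕ} {h : EuclideanSpace ℝ (Fin n) → ℝ}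
    {v x y : EuclideanSpace ℝ (Fin n)}
    (hc : ConvexOn ℝ Set.univ h) (hg : HasGradientAt h v x) :
    h x + ⟪v, y - x⟫ ≤ h y := by
  set φ : ℝ → ℝ := fun t => h (AffineMap.lineMap x y t) with hφ
  have hφc : ConvexOn ℝ Set.univ φ := by
    have := hc.comp_affineMap (AffineMap.lineMap x y : ℝ →ᵃ[ℝ] EuclideanSpace ℝ (Fin n))
    simp only [Set.preimage_univ] at this
    exact this
  have hd : HasDerivAt φ (⟪v, y - x⟫) 0 := by
    have hline : HasDerivAt (fun t : ℝ => AffineMap.lineMap x y t) (y - x) 0 := by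
      have heq : (fun t : ℝ => AffineMap.lineMap x y t) = fun t : ℝ => t • (y - x) + x := by
        funext t
        simp [AffineMap.lineMap_apply_module, sub_smul, smul_sub, one_smul]
        abel
      rw [heq]
      have : HasDerivAt (fun t : ℝ => t • (y - x)) ((1 : ℝ) • (y - x)) 0 :=
        (hasDerivAt_id 0).smul_const (y - x)
      simpa using this.add_const x
    have hF : HasFDerivAt h (InnerProductSpace.toDual ℝ _ v : _ →L[ℝ] ℝ)
        (AffineMap.lineMap x y (0 : ℝ)) := by
      rw [AffineMap.lineMap_apply_zero]; exact hasGradientAt_iff_hasFDerivAt.mp hg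
    have := hF.comp_hasDerivAt (0 : ℝ) hline
    simp only [InnerProductSpace.toDual_apply_apply] at this
    exact this
  have hslope : ⟪v, y - x⟫ ≤ slope φ 0 1 :=
    hφc.le_slope_of_hasDerivAt (Set.mem_univ 0) (Set.mem_univ 1) one_pos hd
  have : slope φ 0 1 = h y - h x := by
    simp [slope_def_field, hφ, AffineMap.lineMap_apply_module]
  linarith [hslope, this ▸ hslope]

/-- `Prog(x) ≤ (1/(2L_f))‖∇F_μ(x)‖² + βμ`. -/
theorem prog_le_smoothed_grad_bound
    {n : ℕ} (f g gμ : EuclideanSpace ℝ (Fin n) → ℝ)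
    (f' gμ' : EuclideanSpace ℝ (Fin n) → EuclideanSpace ℝ (Fin n))
    (Lf : ℝ) (hLf : 0 < Lf)
    (hf : ConvexOn ℝ Set.univ f)
    (hf' : ∀ x, HasGradientAt f (f' x) x)
    (hLip : ∀ x y, ‖f' x - f' y‖ ≤ Lf * ‖x - y‖)
    (hg : ConvexOn ℝ Set.univ g)
    (μ β β₁ β₂ : ℝ) (hμ : 0 < μ) (hβ₁ : 0 ≤ β₁) (hβ₂ : 0 ≤ β₂) (hβ : β = β₁ + β₂)
    (hgμconv : ConvexOn ℝ Set.univ gμ)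
    (hgμ' : ∀ y, HasGradientAt gμ (gμ' y) y)
    (hlow : ∀ y, g y - β₁ * μ ≤ gμ y)
    (hhigh : ∀ y, gμ y ≤ g y + β₂ * μ)
    (x p : EuclideanSpace ℝ (Fin n))
    (hp : IsMinOn (fun y => Lf / 2 * ‖y - x‖ ^ 2 + ⟪f' x, y - x⟫ + g y) Set.univ p) :
    -(Lf / 2 * ‖p - x‖ ^ 2 + ⟪f' x, p - x⟫ + g p - g x) ≤
      1 / (2 * Lf) * ‖f' x + gμ' x‖ ^ 2 + β * μ := by
  have h1 : gμ x + ⟪gμ' x, p - x⟫ ≤ gμ p := grad_lower_bound_aux hgμconv (hgμ' x)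
  have h2 := hhigh p
  have h3 := hlow x
  -- g p - g x ≥ ⟪gμ' x, p - x⟫ - β * μ
  have hgd : ⟪gμ' x, p - x⟫ - β * μ ≤ g p - g x := by
    rw [hβ]; linarith
  set v := f' x + gμ' x with hv
  set d := p - x with hd
  have hin : ⟪f' x, d⟫ + ⟪gμ' x, d⟫ = ⟪v, d⟫ := by
    rw [hv]; rw [inner_add_left]
  have hcs : -(‖v‖ * ‖d‖) ≤ ⟪v, d⟫ := neg_le_of_neg_le (by
    have := abs_real_inner_le_norm v d
    linarith [abs_le.mp this])
  have hnd : (0:ℝ) ≤ ‖d‖ := norm_nonneg d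
  have hnv : (0:ℝ) ≤ ‖v‖ := norm_nonneg v
  have hquad : -(Lf / 2 * ‖d‖ ^ 2 + ⟪v, d⟫) ≤ 1 / (2 * Lf) * ‖v‖ ^ 2 := by
    have hsq : 0 ≤ (Lf * ‖d‖ - ‖v‖) ^ 2 := sq_nonneg _
    have h2Lf : 0 < 2 * Lf := by linarith
    have heq : 1 / (2 * Lf) * ‖v‖ ^ 2 = ‖v‖ ^ 2 / (2 * Lf) := by ring
    rw [heq, le_div_iff₀ h2Lf]
    nlinarith [hcs, hsq]
  have : -(Lf / 2 * ‖d‖ ^ 2 + ⟪f' x, d⟫ + g p - g x) ≤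
      -(Lf / 2 * ‖d‖ ^ 2 + ⟪v, d⟫) + β * μ := by
    have := hgd
    nlinarith [hin]
  linarith [hquad, this]
end
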